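/- (Case 2 of pattern fusion yields exactly two order-classes.) Let m ≥ 1 and let p, q : Fin m → ℝ be injective patterns such that the suffix of p and the prefix of q have the same relative order, and suppose the rank counts agree: cardinality of {j : p j < p 0} = cardinality of {j : q j < q (m−1)}. Then there exist injective patterns s, s' : Fin (m+1) → ℝ, each of whose prefixes has the same relative order as p and whose suffixes have the same relative order as q, with s 0 < s m and s' m < s' 0; in particular s and s' do not have the same relative order. Moreover, every injective pattern of length m+1 whose prefix has the same relative order as p and whose suffix has the same relative order as q has the same relative order as s or as s'. -/

import Mathlib

/-- For a pattern `u` of length `m+1`, its prefix `(u 0, …, u (m-1))`. -/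
def prefixPat {m : ℕ} {α : Type*} (u : Fin (m + 1) → α) : Fin m → α :=
  fun j => u j.castSucc

/-- For a pattern `u` of length `m+1`, its suffix `(u 1, …, u m)`. -/
def suffixPat {m : ℕ} {α : Type*} (u : Fin (m + 1) → α) : Fin m → α :=
  fun j => u j.succ

/-- `p` occurs in the time series `t` at (0-based) ending position `i`:
the window `(t (i-m+1), …, t i)` has the same relative order as `p`. -/
def occursAt {n m : ℕ} {α : Type*} [LT α] (t : Fin n → ℝ) (p : Fin m → α) (i : ℕ) : Prop :=
  ∃ (h1 : m ≤ i + 1) (h2 : i < n),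
    ∀ a b : Fin m,
      (t ⟨i + 1 - m + a.val, by have := a.isLt; omega⟩ <
        t ⟨i + 1 - m + b.val, by have := b.isLt; omega⟩) ↔ p a < p b

/-- The support of `p` in `t`: the number of ending positions at which `p` occurs. -/
noncomputable def supCount {n m : ℕ} {α : Type*} [LT α] (t : Fin n → ℝ) (p : Fin m → α) : ℕ :=
  {i : ℕ | occursAt t p i}.ncard

lemma natHalf1 (a b : ℕ) : (a:ℝ) - 1/2 < b ↔ a ≤ b := by
  constructor
  · intro h; by_contra h'; push_neg at h'
    have : (b:ℝ) + 1 ≤ a := by exact_mod_cast h'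
    linarith
  · intro h; have : (a:ℝ) ≤ b := by exact_mod_cast h
    linarith

lemma natHalf2 (a b : ℕ) : (b:ℝ) < (a:ℝ) - 1/2 ↔ b < a := by
  constructor
  · intro h; by_contra h'; push_neg at h'
    have : (a:ℝ) ≤ b := by exact_mod_cast h'
    linarith
  · intro h; have : (b:ℝ) + 1 ≤ a := by exact_mod_cast h
    linarith

lemma natHalf3 (a b : ℕ) : (a:ℝ) + 1/2 < b ↔ a < b := by
  constructor
  · intro h; by_contra h'; push_neg at h'
    have : (b:ℝ) ≤ a := by exact_mod_cast h'
    linarith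
  · intro h; have : (a:ℝ) + 1 ≤ b := by exact_mod_cast h
    linarith

lemma natHalf4 (a b : ℕ) : (b:ℝ) < (a:ℝ) + 1/2 ↔ b ≤ a := by
  constructor
  · intro h; by_contra h'; push_neg at h'
    have : (a:ℝ) + 1 ≤ b := by exact_mod_cast h'
    linarith
  · intro h; have : (b:ℝ) ≤ a := by exact_mod_cast h
    linarith

lemma natHalf5 (a b : ℕ) : (a:ℝ) - 1/2 ≠ b := by
  intro h
  have h1 : b < a := by exact_mod_cast show (b:ℝ) < a by linarith
  have : (b:ℝ) + 1 ≤ a := by exact_mod_cast h1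
  linarith

lemma natHalf6 (a b : ℕ) : (a:ℝ) + 1/2 ≠ b := by
  intro h
  have h1 : a < b := by exact_mod_cast show (a:ℝ) < b by linarith
  have : (a:ℝ) + 1 ≤ b := by exact_mod_cast h1
  linarith

/-- rank comparison reflects value comparison -/
lemma rank_lt_iff {n : ℕ} (u : Fin n → ℝ) (i j : Fin n) :
    {k | u k < u i}.ncard < {k | u k < u j}.ncard ↔ u i < u j := by
  constructor
  · intro h
    by_contra hle
    push_neg at hle
    have hsub : {k | u k < u j} ⊆ {k | u k < u i} := fun k hk => lt_of_lt_of_le hk hle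
    have := Set.ncard_le_ncard hsub (Set.toFinite _)
    omega
  · intro h
    refine Set.ncard_lt_ncard ?_ (Set.toFinite _)
    constructor
    · exact fun k hk => lt_trans hk h
    · intro hsub
      exact lt_irrefl (u i) (hsub h)

lemma count_le_iff {n : ℕ} {u : Fin n → ℝ} {x : ℝ} (hx : ∀ k, u k ≠ x) (j : Fin n) :
    {k | u k < x}.ncard ≤ {k | u k < u j}.ncard ↔ x < u j := by
  constructor
  · intro h
    rcases lt_trichotomy x (u j) with h'|h'|h'
    · exact h'
    · exact absurd h'.symm (hx j)
    · exfalso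
      have hss : {k | u k < u j} ⊂ {k | u k < x} := by
        constructor
        · exact fun k hk => lt_trans hk h'
        · intro hsub
          exact lt_irrefl (u j) (hsub h')
      have := Set.ncard_lt_ncard hss (Set.toFinite _)
      omega
  · intro h
    exact Set.ncard_le_ncard (fun k hk => lt_trans hk h) (Set.toFinite _)

lemma lt_iff_flip {a b c d : ℝ} (h : a < b ↔ c < d) (hab : a ≠ b) (hcd : c ≠ d) :
    b < a ↔ d < c := by
  constructor
  · intro h2
    by_contra h3
    rw [not_lt] at h3
    rcases h3.lt_or_eq with h4|h4
    · exact absurd (h.mpr h4) (by linarith)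
    · exact hcd h4
  · intro h2
    by_contra h3
    rw [not_lt] at h3
    rcases h3.lt_or_eq with h4|h4
    · exact absurd (h.mp h4) (by linarith)
    · exact hab h4

/-- rank of index `j` in pattern `u`. -/
noncomputable def rnk {n : ℕ} (u : Fin n → ℝ) (j : Fin n) : ℕ := {k | u k < u j}.ncard

lemma rnk_lt {n : ℕ} (u : Fin n → ℝ) (i j : Fin n) : rnk u i < rnk u j ↔ u i < u j := rank_lt_iff u i j

lemma rnk_inj {n : ℕ} {u : Fin n → ℝ} (hu : Function.Injective u) {i j : Fin n}
    (h : rnk u i = rnk u j) : i = j := by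
  rcases lt_trichotomy (u i) (u j) with h'|h'|h'
  · exact absurd ((rnk_lt u i j).mpr h') (by omega)
  · exact hu h'
  · exact absurd ((rnk_lt u j i).mpr h') (by omega)

lemma fusion_key {m : ℕ} (p q : Fin (m + 1) → ℝ)
    (hp : Function.Injective p) (hq : Function.Injective q)
    (hpq : ∀ i j : Fin m, suffixPat p i < suffixPat p j ↔ prefixPat q i < prefixPat q j)
    (hrank : {j | p j < p 0}.ncard = {j | q j < q (Fin.last m)}.ncard) (j : Fin m) :
    p 0 < p j.succ ↔ q (Fin.last m) < q j.castSucc := by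
  have hpq' : ∀ i j : Fin m, (p i.succ < p j.succ ↔ q i.castSucc < q j.castSucc) :=
    fun i j => hpq i j
  have e1 : {j : Fin (m+1) | p j < p 0} = Fin.succ '' {k : Fin m | p k.succ < p 0} := by
    ext i
    simp only [Set.mem_image, Set.mem_setOf_eq]
    constructor
    · intro hi
      have hi0 : i ≠ 0 := by rintro rfl; exact lt_irrefl _ hi
      obtain ⟨k, rfl⟩ := Fin.eq_succ_of_ne_zero hi0
      exact ⟨k, hi, rfl⟩
    · rintro ⟨k, hk, rfl⟩; exact hk
  have e2 : {j : Fin (m+1) | q j < q (Fin.last m)} =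
      Fin.castSucc '' {k : Fin m | q k.castSucc < q (Fin.last m)} := by
    ext i
    simp only [Set.mem_image, Set.mem_setOf_eq]
    constructor
    · intro hi
      have hi0 : i ≠ Fin.last m := by rintro rfl; exact lt_irrefl _ hi
      obtain ⟨k, rfl⟩ := Fin.exists_castSucc_eq.mpr hi0
      exact ⟨k, hi, rfl⟩
    · rintro ⟨k, hk, rfl⟩; exact hk
  have c1 : {k : Fin m | p k.succ < p 0}.ncard =
      {k : Fin m | q k.castSucc < q (Fin.last m)}.ncard := by
    have h := hrank
    rw [e1, e2, Set.ncard_image_of_injective _ (Fin.succ_injective m),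
      Set.ncard_image_of_injective _ (Fin.castSucc_injective m)] at h
    exact h
  have hxp : ∀ k : Fin m, p k.succ ≠ p 0 := fun k h => Fin.succ_ne_zero k (hp h)
  have hxq : ∀ k : Fin m, q k.castSucc ≠ q (Fin.last m) :=
    fun k h => (Fin.castSucc_lt_last k).ne (hq h)
  have A : p 0 < p j.succ ↔
      {k : Fin m | p k.succ < p 0}.ncard ≤ {k : Fin m | p k.succ < p j.succ}.ncard :=
    (count_le_iff (u := fun k : Fin m => p k.succ) hxp j).symm
  have B : q (Fin.last m) < q j.castSucc ↔
      {k : Fin m | q k.castSucc < q (Fin.last m)}.ncard ≤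
        {k : Fin m | q k.castSucc < q j.castSucc}.ncard :=
    (count_le_iff (u := fun k : Fin m => q k.castSucc) hxq j).symm
  have e3 : {k : Fin m | p k.succ < p j.succ} = {k : Fin m | q k.castSucc < q j.castSucc} :=
    Set.ext fun k => hpq' k j
  rw [A, B, c1, e3]

lemma fusion_ext {m : ℕ} (w v : Fin (m+2) → ℝ)
    (hpre : ∀ i j : Fin (m+1), prefixPat w i < prefixPat w j ↔ prefixPat v i < prefixPat v j)
    (hsuf : ∀ i j : Fin (m+1), suffixPat w i < suffixPat w j ↔ suffixPat v i < suffixPat v j)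
    (hsame : w 0 < w (Fin.last (m+1)) ↔ v 0 < v (Fin.last (m+1)))
    (hwne : w 0 ≠ w (Fin.last (m+1))) (hvne : v 0 ≠ v (Fin.last (m+1))) :
    ∀ i j, w i < w j ↔ v i < v j := by
  have flip : ∀ {a b c d : ℝ}, (a < b ↔ c < d) → a ≠ b → c ≠ d → (b < a ↔ d < c) :=
    fun h hab hcd => lt_iff_flip h hab hcd
  intro i j
  induction i using Fin.cases with
  | zero =>
    induction j using Fin.cases with
    | zero => simp
    | succ b =>
      induction b using Fin.lastCases with
      | last => rw [Fin.succ_last]; exact hsame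
      | cast c =>
        rw [Fin.succ_castSucc]
        simpa [prefixPat, Fin.castSucc_zero] using hpre 0 c.succ
  | succ a =>
    induction j using Fin.cases with
    | zero =>
      induction a using Fin.lastCases with
      | last => rw [Fin.succ_last]; exact flip hsame hwne hvne
      | cast c =>
        rw [Fin.succ_castSucc]
        simpa [prefixPat, Fin.castSucc_zero] using hpre c.succ 0
    | succ b =>
      simpa [suffixPat] using hsuf a b




/-- Case 2 of pattern fusion yields exactly two order-classes: when the rank
counts of `p 0` in `p` and of the last entry of `q` in `q` agree, there are
fusions `s` (with first entry below last) and `s'` (with last entry below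
first), these are order-inequivalent, and every injective fusion of `p` and `q`
is order-equivalent to `s` or to `s'`. -/
theorem fusion_case_two_classes {m : ℕ} (p q : Fin (m + 1) → ℝ)
    (hp : Function.Injective p) (hq : Function.Injective q)
    (hpq : ∀ i j : Fin m, suffixPat p i < suffixPat p j ↔ prefixPat q i < prefixPat q j)
    (hrank : {j | p j < p 0}.ncard = {j | q j < q (Fin.last m)}.ncard) :
    ∃ s s' : Fin (m + 2) → ℝ,
      Function.Injective s ∧ Function.Injective s' ∧
      (∀ i j : Fin (m + 1), prefixPat s i < prefixPat s j ↔ p i < p j) ∧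
      (∀ i j : Fin (m + 1), suffixPat s i < suffixPat s j ↔ q i < q j) ∧
      (∀ i j : Fin (m + 1), prefixPat s' i < prefixPat s' j ↔ p i < p j) ∧
      (∀ i j : Fin (m + 1), suffixPat s' i < suffixPat s' j ↔ q i < q j) ∧
      s 0 < s (Fin.last (m + 1)) ∧ s' (Fin.last (m + 1)) < s' 0 ∧
      ¬ (∀ i j, s i < s j ↔ s' i < s' j) ∧
      (∀ w : Fin (m + 2) → ℝ, Function.Injective w →
        (∀ i j : Fin (m + 1), prefixPat w i < prefixPat w j ↔ p i < p j) →
        (∀ i j : Fin (m + 1), suffixPat w i < suffixPat w j ↔ q i < q j) →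
        ((∀ i j, w i < w j ↔ s i < s j) ∨ (∀ i j, w i < w j ↔ s' i < s' j))) := by
  classical
  have hpq' : ∀ i j : Fin m, (p i.succ < p j.succ ↔ q i.castSucc < q j.castSucc) :=
    fun i j => hpq i j
  have key : ∀ j : Fin m, (p 0 < p j.succ ↔ q (Fin.last m) < q j.castSucc) :=
    fusion_key p q hp hq hpq hrank
  have key' : ∀ j : Fin m, (p j.succ < p 0 ↔ q j.castSucc < q (Fin.last m)) := fun j =>
    lt_iff_flip (key j) (fun h => (Fin.succ_ne_zero j) (hp h).symm)
      (fun h => (Fin.castSucc_lt_last j).ne' (hq h))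
  have hRne : ∀ k : Fin m, rnk q k.castSucc ≠ rnk q (Fin.last m) :=
    fun k h => (Fin.castSucc_lt_last k).ne (rnk_inj hq h)
  -- generic construction of a fusion with first value `x`
  have build : ∀ x : ℝ,
      (∀ k : Fin m, (x < (rnk q k.castSucc : ℝ) ↔ p 0 < p k.succ)) →
      (∀ k : Fin m, ((rnk q k.castSucc : ℝ) < x ↔ p k.succ < p 0)) →
      (∀ j : Fin (m+1), x ≠ (rnk q j : ℝ)) →
      Function.Injective (Fin.cases x (fun j => (rnk q j : ℝ)) : Fin (m+2) → ℝ) ∧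
      (∀ i j : Fin (m + 1),
        prefixPat (Fin.cases x (fun j => (rnk q j : ℝ)) : Fin (m+2) → ℝ) i <
          prefixPat (Fin.cases x (fun j => (rnk q j : ℝ)) : Fin (m+2) → ℝ) j ↔ p i < p j) ∧
      (∀ i j : Fin (m + 1),
        suffixPat (Fin.cases x (fun j => (rnk q j : ℝ)) : Fin (m+2) → ℝ) i <
          suffixPat (Fin.cases x (fun j => (rnk q j : ℝ)) : Fin (m+2) → ℝ) j ↔ q i < q j) := by
    intro x hx1 hx2 hx3
    set v : Fin (m+2) → ℝ := (Fin.cases x (fun j => (rnk q j : ℝ)) : Fin (m+2) → ℝ) with hvdef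
    have hv0 : v 0 = x := by simp [hvdef]
    have hvs : ∀ j : Fin (m+1), v j.succ = (rnk q j : ℝ) := fun j => by simp [hvdef]
    refine ⟨?_, ?_, ?_⟩
    · intro i j
      induction i using Fin.cases with
      | zero =>
        induction j using Fin.cases with
        | zero => exact fun _ => rfl
        | succ b =>
          intro hij
          rw [hv0, hvs] at hij
          exact absurd hij (hx3 b)
      | succ a =>
        induction j using Fin.cases with
        | zero =>
          intro hij
          rw [hv0, hvs] at hij
          exact absurd hij.symm (hx3 a)
        | succ b =>
          intro hij
          rw [hvs, hvs] at hij
          exact congrArg Fin.succ (rnk_inj hq (Nat.cast_injective hij))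
    · intro i j
      simp only [prefixPat]
      induction i using Fin.cases with
      | zero =>
        induction j using Fin.cases with
        | zero => simp
        | succ b =>
          rw [Fin.castSucc_zero, ← Fin.succ_castSucc, hv0, hvs]
          exact hx1 b
      | succ a =>
        induction j using Fin.cases with
        | zero =>
          rw [Fin.castSucc_zero, ← Fin.succ_castSucc, hv0, hvs]
          exact hx2 a
        | succ b =>
          rw [← Fin.succ_castSucc, ← Fin.succ_castSucc, hvs, hvs, Nat.cast_lt]
          exact (rnk_lt q _ _).trans (hpq' a b).symm
    · intro i j
      simp only [suffixPat]
      rw [hvs, hvs, Nat.cast_lt]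
      exact rnk_lt q i j
  -- the two candidate fusions
  set r0 : ℕ := rnk q (Fin.last m) with hr0
  set s : Fin (m+2) → ℝ := (Fin.cases ((r0:ℝ) - 1/2) (fun j => (rnk q j : ℝ))) with hsdef
  set s' : Fin (m+2) → ℝ := (Fin.cases ((r0:ℝ) + 1/2) (fun j => (rnk q j : ℝ))) with hs'def
  have hmid : ∀ k : Fin m, (r0 < rnk q k.castSucc ↔ p 0 < p k.succ) := fun k => by
    rw [hr0, rnk_lt]
    exact (key k).symm
  have hmid' : ∀ k : Fin m, (rnk q k.castSucc < r0 ↔ p k.succ < p 0) := fun k => by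
    rw [hr0, rnk_lt]
    exact (key' k).symm
  obtain ⟨hsinj, hsp, hsq⟩ := build ((r0:ℝ) - 1/2)
    (fun k => by rw [natHalf1]; have h := hRne k
                 rw [show (r0 ≤ rnk q k.castSucc) ↔ (r0 < rnk q k.castSucc) by omega]
                 exact hmid k)
    (fun k => by rw [natHalf2]; exact hmid' k)
    (fun j => natHalf5 r0 (rnk q j))
  obtain ⟨hs'inj, hs'p, hs'q⟩ := build ((r0:ℝ) + 1/2)
    (fun k => by rw [natHalf3]; exact hmid k)
    (fun k => by rw [natHalf4]; have h := hRne k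
                 rw [show (rnk q k.castSucc ≤ r0) ↔ (rnk q k.castSucc < r0) by omega]
                 exact hmid' k)
    (fun j => natHalf6 r0 (rnk q j))
  have hslast : s (Fin.last (m+1)) = (r0 : ℝ) := by
    have h := (Fin.succ_last m).symm
    rw [h]
    simp only [hsdef]
    rw [Fin.cases_succ, hr0]
  have hs'last : s' (Fin.last (m+1)) = (r0 : ℝ) := by
    have h := (Fin.succ_last m).symm
    rw [h]
    simp only [hs'def]
    rw [Fin.cases_succ, hr0]
  have hs0 : s 0 = (r0:ℝ) - 1/2 := by simp [hsdef]
  have hs'0 : s' 0 = (r0:ℝ) + 1/2 := by simp [hs'def]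
  have hslt : s 0 < s (Fin.last (m+1)) := by rw [hs0, hslast]; norm_num
  have hs'lt : s' (Fin.last (m+1)) < s' 0 := by rw [hs'0, hs'last]; norm_num
  refine ⟨s, s', hsinj, hs'inj, hsp, hsq, hs'p, hs'q, hslt, hs'lt, ?_, ?_⟩
  · intro hall
    have h := (hall 0 (Fin.last (m+1))).mp hslt
    exact absurd h (not_lt.mpr hs'lt.le)
  · intro w hw hwp hwq
    have h0l : (0 : Fin (m+2)) ≠ Fin.last (m+1) := by
      simp [Fin.ext_iff]
    have hwne : w 0 ≠ w (Fin.last (m+1)) := fun h => h0l (hw h)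
    rcases lt_or_gt_of_ne hwne with hcase | hcase
    · left
      exact fusion_ext w s (fun i j => (hwp i j).trans (hsp i j).symm)
        (fun i j => (hwq i j).trans (hsq i j).symm)
        (iff_of_true hcase hslt) hwne hslt.ne
    · right
      exact fusion_ext w s' (fun i j => (hwp i j).trans (hs'p i j).symm)
        (fun i j => (hwq i j).trans (hs'q i j).symm)
        (iff_of_false (lt_asymm hcase) (lt_asymm hs'lt)) hwne (fun h => h0l (hs'inj h))
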